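/- The map from B_{n+1} to B_n which sends a partial permutation (σ,d) to (σ,d) if d ⊆ {1,…,n} and to 0 otherwise is a surjective algebra homomorphism. -/

import Mathlib

/-- Partial permutations `(σ,d)` with `d ⊆ {1,…,n}`. -/
abbrev PPb (n : ℕ) : Type :=
  {p : Equiv.Perm ℕ × Finset ℕ // (∀ x ∉ p.2, p.1 x = x) ∧ p.2 ⊆ Finset.Icc 1 n}

instance (n : ℕ) : Monoid (PPb n) where
  mul p q := ⟨(p.1.1 * q.1.1, p.1.2 ∪ q.1.2), by
    constructor
    · intro x hx
      simp only [Finset.mem_union, not_or] at hx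
      simp [Equiv.Perm.mul_apply, q.2.1 x hx.2, p.2.1 x hx.1]
    · exact Finset.union_subset p.2.2 q.2.2⟩
  one := ⟨(1, ∅), fun x _ => rfl, Finset.empty_subset _⟩
  mul_assoc p q r := Subtype.ext (Prod.ext (mul_assoc _ _ _) (Finset.union_assoc _ _ _))
  one_mul p := Subtype.ext (Prod.ext (one_mul _) (Finset.empty_union _))
  mul_one p := Subtype.ext (Prod.ext (mul_one _) (Finset.union_empty _))

/-- The algebra `B_n` of partial permutations of `{1,…,n}`. -/
abbrev Bb (n : ℕ) : Type := MonoidAlgebra ℚ (PPb n)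

/-- the map `B_{n+1} → B_n` sending `(σ,d)` to itself if `d ⊆ {1,…,n}` and to `0`
otherwise is a surjective algebra homomorphism. -/
theorem restriction_surjective_algHom (n : ℕ) :
    ∃ F : Bb (n+1) →ₐ[ℚ] Bb n,
      Function.Surjective F ∧
      ∀ p : PPb (n+1), F (MonoidAlgebra.of ℚ (PPb (n+1)) p)
        = if h : p.1.2 ⊆ Finset.Icc 1 n then
            MonoidAlgebra.of ℚ (PPb n) ⟨p.1, p.2.1, h⟩ else 0 := by
  have hsub : Finset.Icc 1 n ⊆ Finset.Icc 1 (n+1) := Finset.Icc_subset_Icc_right (by omega)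
  let f : PPb (n+1) →* Bb n :=
  { toFun := fun p => if h : p.1.2 ⊆ Finset.Icc 1 n then
      MonoidAlgebra.of ℚ (PPb n) ⟨p.1, p.2.1, h⟩ else 0
    map_one' := by
      rw [dif_pos (show (1:PPb (n+1)).1.2 ⊆ _ from Finset.empty_subset _)]
      rfl
    map_mul' := by
      intro p q
      by_cases hp : p.1.2 ⊆ Finset.Icc 1 n
      · by_cases hq : q.1.2 ⊆ Finset.Icc 1 n
        · rw [dif_pos hp, dif_pos hq,
            dif_pos (show (p*q).1.2 ⊆ _ from Finset.union_subset hp hq), ← map_mul]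
          rfl
        · rw [dif_neg hq, mul_zero, dif_neg]
          intro h
          exact hq (fun x hx => h (Finset.mem_union_right _ hx))
      · rw [dif_neg hp, zero_mul, dif_neg]
        intro h
        exact hp (fun x hx => h (Finset.mem_union_left _ hx)) }
  refine ⟨MonoidAlgebra.lift ℚ (Bb n) (PPb (n+1)) f, ?_, ?_⟩
  · intro x
    induction x using MonoidAlgebra.induction_on with
    | of q =>
        refine ⟨MonoidAlgebra.of ℚ (PPb (n+1)) ⟨q.1, q.2.1, q.2.2.trans hsub⟩, ?_⟩
        rw [MonoidAlgebra.lift_of]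
        simp only [f, MonoidHom.coe_mk, OneHom.coe_mk]
        rw [dif_pos q.2.2]
    | add a b ha hb =>
        obtain ⟨x, hx⟩ := ha; obtain ⟨y, hy⟩ := hb
        exact ⟨x + y, by rw [map_add, hx, hy]⟩
    | smul r a ha =>
        obtain ⟨x, hx⟩ := ha
        exact ⟨r • x, by rw [map_smul, hx]⟩
  · intro p
    rw [MonoidAlgebra.lift_of]
    rfl
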